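/- Let R be a ring, g ∈ R an idempotent, and ι_n : gRg → M_n(R) the upper-left corner inclusion composed with the inclusion gRg ⊆ R. If e, f ∈ gRg are idempotents that become Murray-von Neumann equivalent in M_n(R) for some n, then e and f are already Murray-von Neumann equivalent in gRg. -/

import Mathlib

open Matrix in
lemma corner_std_mul {R : Type*} [Ring R] {n : ℕ} (e f : R)
    (M : Matrix (Fin (n + 1)) (Fin (n + 1)) R) :
    Matrix.single 0 0 e * M * Matrix.single 0 0 f
      = Matrix.single 0 0 (e * M 0 0 * f) := by
  ext i j
  by_cases hi : i = 0 <;> by_cases hj : j = 0 <;>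
    simp [Matrix.mul_apply, Matrix.single, hi, hj, eq_comm, mul_assoc,
      Finset.sum_ite_eq, Finset.sum_ite_eq']

/-- Let `R` be a ring, `g` an idempotent, and `e, f` idempotents of the
corner `gRg` (expressed by `g*e*g = e`, `g*f*g = f`).  If for some `n` the images of
`e` and `f` under the upper-left corner inclusion `ι_n : gRg → Mₙ(R)`
(`a ↦ stdBasisMatrix 0 0 a`) are Murray-von Neumann equivalent in `Mₙ(R)`, then `e`
and `f` are Murray-von Neumann equivalent already in `gRg`. -/
theorem mvn_corner_of_matrix {R : Type*} [Ring R]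
    (g e f : R) (hg : g * g = g) (he : e * e = e) (hf : f * f = f)
    (heg : g * e * g = e) (hfg : g * f * g = f)
    (hmat : ∃ (n : ℕ) (x y : Matrix (Fin (n + 1)) (Fin (n + 1)) R),
      x * y = Matrix.single 0 0 e ∧
      y * x = Matrix.single 0 0 f) :
    ∃ x y : R, g * x * g = x ∧ g * y * g = y ∧ x * y = e ∧ y * x = f := by
  obtain ⟨n, x, y, hx, hy⟩ := hmat
  set E : Matrix (Fin (n + 1)) (Fin (n + 1)) R := Matrix.single 0 0 e with hE
  set F : Matrix (Fin (n + 1)) (Fin (n + 1)) R := Matrix.single 0 0 f with hF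
  have hge : g * e = e := by
    conv_lhs => rw [← heg]
    rw [← mul_assoc, ← mul_assoc, hg, heg]
  have heg' : e * g = e := by
    conv_lhs => rw [← heg]
    rw [mul_assoc, mul_assoc, hg, ← mul_assoc, heg]
  have hgf : g * f = f := by
    conv_lhs => rw [← hfg]
    rw [← mul_assoc, ← mul_assoc, hg, hfg]
  have hfg' : f * g = f := by
    conv_lhs => rw [← hfg]
    rw [mul_assoc, mul_assoc, hg, ← mul_assoc, hfg]
  have hEE : E * E = E := by
    rw [hE, Matrix.single_mul_single_same, he]
  have hFF : F * F = F := by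
    rw [hF, Matrix.single_mul_single_same, hf]
  have hxFy : x * F * y = E := by
    have h : x * F * y = (x * y) * (x * y) := by rw [← hy]; noncomm_ring
    rw [h, hx, hEE]
  have hyEx : y * E * x = F := by
    have h : y * E * x = (y * x) * (y * x) := by rw [← hx]; noncomm_ring
    rw [h, hy, hFF]
  set a := e * x 0 0 * f with ha
  set b := f * y 0 0 * e with hb
  have hExF : E * x * F = Matrix.single 0 0 a := by
    rw [hE, hF, corner_std_mul, ha]
  have hFyE : F * y * E = Matrix.single 0 0 b := by
    rw [hE, hF, corner_std_mul, hb]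
  have hab : (Matrix.single (0 : Fin (n + 1)) (0 : Fin (n + 1)) (a * b)) = E := by
    rw [← Matrix.single_mul_single_same (j := (0 : Fin (n + 1))), ← hExF, ← hFyE]
    calc (E * x * F) * (F * y * E) = E * (x * F * y) * E := by
          rw [show (E * x * F) * (F * y * E) = E * (x * (F * F) * y) * E by noncomm_ring, hFF]
      _ = E := by rw [hxFy, hEE, hEE]
  have hba : (Matrix.single (0 : Fin (n + 1)) (0 : Fin (n + 1)) (b * a)) = F := by
    rw [← Matrix.single_mul_single_same (j := (0 : Fin (n + 1))), ← hExF, ← hFyE]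
    calc (F * y * E) * (E * x * F) = F * (y * E * x) * F := by
          rw [show (F * y * E) * (E * x * F) = F * (y * (E * E) * x) * F by noncomm_ring, hEE]
      _ = F := by rw [hyEx, hFF, hFF]
  have hab' : a * b = e := by
    have h := congrFun (congrFun hab 0) 0
    simpa [hE] using h
  have hba' : b * a = f := by
    have h := congrFun (congrFun hba 0) 0
    simpa [hF] using h
  refine ⟨a, b, ?_, ?_, hab', hba'⟩
  · rw [ha, show g * (e * x 0 0 * f) * g = (g * e) * x 0 0 * (f * g) by noncomm_ring,
      hge, hfg']
  · rw [hb, show g * (f * y 0 0 * e) * g = (g * f) * y 0 0 * (e * g) by noncomm_ring,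
      hgf, heg']
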